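/- arXiv:1710.07787 — 10 statements merged into one kernel-verified Lean document; each statement's English description precedes it below -/
import Mathlib

section
/- Fix V₀ > 0 and P̃_g, Q̃_g ∈ ℝ. There exists a power-flow solution, i.e. a pair of complex numbers (V_g, J) with V_g = V₀ + J and V_g·conj(J) = P̃_g + i·Q̃_g, if and only if the discriminant D := V₀⁴/4 + V₀²·P̃_g − Q̃_g² is nonnegative. -/
/-- Existence of a two-bus power-flow solution (in rotated coordinates) is
equivalent to nonnegativity of the discriminant `D = V₀⁴/4 + V₀²·P̃g − Q̃g²`. -/
theorem powerflow_solution_exists_iff_discriminant_nonneg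
    (V₀ Pg Qg : ℝ) (hV₀ : 0 < V₀) :
    (∃ Vg J : ℂ, Vg = (V₀ : ℂ) + J ∧
        Vg * (starRingEnd ℂ) J = (Pg : ℂ) + (Qg : ℂ) * Complex.I) ↔
      0 ≤ V₀ ^ 4 / 4 + V₀ ^ 2 * Pg - Qg ^ 2 := by
  have hV₀' : V₀ ≠ 0 := ne_of_gt hV₀
  constructor
  · rintro ⟨Vg, J, rfl, h⟩
    rw [Complex.ext_iff] at h
    simp [Complex.mul_re, Complex.mul_im] at h
    obtain ⟨hre, him⟩ := h
    have hQ : Qg = -(V₀ * J.im) := by linarith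
    have hP : Pg = (V₀ + J.re) * J.re + J.im * J.im := hre.symm
    subst hQ hP
    nlinarith [sq_nonneg (V₀ * V₀ / 2 + V₀ * J.re)]
  · intro hD
    set D := V₀ ^ 4 / 4 + V₀ ^ 2 * Pg - Qg ^ 2 with hDdef
    set x : ℝ := -V₀ / 2 + Real.sqrt D / V₀ with hx
    set y : ℝ := -Qg / V₀ with hy
    refine ⟨(V₀ : ℂ) + (⟨x, y⟩ : ℂ), (⟨x, y⟩ : ℂ), rfl, ?_⟩
    have hs : Real.sqrt D ^ 2 = D := Real.sq_sqrt hD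
    rw [Complex.ext_iff]
    constructor <;> simp [Complex.mul_re, Complex.mul_im]
    · have hs' : Real.sqrt D ^ 2 = V₀ ^ 4 / 4 + V₀ ^ 2 * Pg - Qg ^ 2 := by
        rw [hs, hDdef]
      rw [hx, hy]
      field_simp
      linear_combination 4 * hs'
    · rw [hy]
      field_simp
      ring
end

section
/- Fix V₀ > 0 and P̃_g, Q̃_g ∈ ℝ with D := V₀⁴/4 + V₀²·P̃_g − Q̃_g² ≥ 0, and set a := P̃_g + V₀²/2. Every power-flow solution (V_g, J) satisfies either (|V_g|², |J|²) = (a + √D, a − √D) or (|V_g|², |J|²) = (a − √D, a + √D); conversely, for each choice of sign ε ∈ {+1, −1} there exists a power-flow solution with |V_g|² = a + ε√D and |J|² = a − ε√D. -/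
/-- With nonnegative discriminant `D`, every two-bus power-flow solution has
`(|Vg|², |J|²) = (a + √D, a − √D)` or `(a − √D, a + √D)` where
`a = P̃g + V₀²/2`, and conversely both sign choices are realised by some
solution. -/
theorem powerflow_solution_voltage_loss_characterisation
    (V₀ Pg Qg : ℝ) (hV₀ : 0 < V₀)
    (hD : 0 ≤ V₀ ^ 4 / 4 + V₀ ^ 2 * Pg - Qg ^ 2) :
    (∀ Vg J : ℂ, Vg = (V₀ : ℂ) + J →
        Vg * (starRingEnd ℂ) J = (Pg : ℂ) + (Qg : ℂ) * Complex.I →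
        (‖Vg‖ ^ 2 =
              (Pg + V₀ ^ 2 / 2) + Real.sqrt (V₀ ^ 4 / 4 + V₀ ^ 2 * Pg - Qg ^ 2) ∧
            ‖J‖ ^ 2 =
              (Pg + V₀ ^ 2 / 2) - Real.sqrt (V₀ ^ 4 / 4 + V₀ ^ 2 * Pg - Qg ^ 2)) ∨
          (‖Vg‖ ^ 2 =
              (Pg + V₀ ^ 2 / 2) - Real.sqrt (V₀ ^ 4 / 4 + V₀ ^ 2 * Pg - Qg ^ 2) ∧
            ‖J‖ ^ 2 =
              (Pg + V₀ ^ 2 / 2) + Real.sqrt (V₀ ^ 4 / 4 + V₀ ^ 2 * Pg - Qg ^ 2))) ∧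
      (∀ ε : ℝ, (ε = 1 ∨ ε = -1) →
        ∃ Vg J : ℂ, Vg = (V₀ : ℂ) + J ∧
          Vg * (starRingEnd ℂ) J = (Pg : ℂ) + (Qg : ℂ) * Complex.I ∧
          ‖Vg‖ ^ 2 =
            (Pg + V₀ ^ 2 / 2) + ε * Real.sqrt (V₀ ^ 4 / 4 + V₀ ^ 2 * Pg - Qg ^ 2) ∧
          ‖J‖ ^ 2 =
            (Pg + V₀ ^ 2 / 2) - ε * Real.sqrt (V₀ ^ 4 / 4 + V₀ ^ 2 * Pg - Qg ^ 2)) := by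
  have hsq : Real.sqrt (V₀ ^ 4 / 4 + V₀ ^ 2 * Pg - Qg ^ 2) ^ 2
      = V₀ ^ 4 / 4 + V₀ ^ 2 * Pg - Qg ^ 2 := Real.sq_sqrt hD
  set s := Real.sqrt (V₀ ^ 4 / 4 + V₀ ^ 2 * Pg - Qg ^ 2) with hs
  have hV₀2 : (V₀ : ℝ) ^ 2 ≠ 0 := pow_ne_zero 2 hV₀.ne'
  constructor
  · intro Vg J hV hS
    subst hV
    have hre := congrArg Complex.re hS
    have him := congrArg Complex.im hS
    simp [Complex.mul_re, Complex.mul_im, Complex.add_re, Complex.add_im] at hre him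
    have hu : ‖((V₀:ℂ) + J)‖ ^ 2 = (V₀ + J.re) ^ 2 + J.im ^ 2 := by
      rw [Complex.sq_norm, Complex.normSq_apply]
      simp
      ring
    have hv : ‖J‖ ^ 2 = J.re ^ 2 + J.im ^ 2 := by
      rw [Complex.sq_norm, Complex.normSq_apply]; ring
    have h1 : (V₀ + J.re) ^ 2 + J.im ^ 2 - (Pg + V₀ ^ 2 / 2)
        = V₀ ^ 2 / 2 + V₀ * J.re := by linear_combination hre
    have h2 : s ^ 2 = (V₀ ^ 2 / 2 + V₀ * J.re) ^ 2 := by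
      rw [hsq]
      linear_combination (-(V₀ ^ 2)) * hre + (Qg - V₀ * J.im) * him
    have key : ((V₀ + J.re) ^ 2 + J.im ^ 2 - (Pg + V₀ ^ 2 / 2) - s) *
        ((V₀ + J.re) ^ 2 + J.im ^ 2 - (Pg + V₀ ^ 2 / 2) + s) = 0 := by
      linear_combination
        ((V₀ + J.re) ^ 2 + J.im ^ 2 - (Pg + V₀ ^ 2 / 2) + (V₀ ^ 2 / 2 + V₀ * J.re)) * h1 - h2
    rcases mul_eq_zero.mp key with h | h
    · left
      refine ⟨by rw [hu]; linarith, ?_⟩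
      rw [hv]; linear_combination 2 * hre - h
    · right
      refine ⟨by rw [hu]; linarith, ?_⟩
      rw [hv]; linear_combination 2 * hre - h
  · intro ε hε
    have hε2 : ε ^ 2 = 1 := by rcases hε with h | h <;> subst h <;> norm_num
    set x : ℝ := (ε * s - V₀ ^ 2 / 2) / V₀ with hxdef
    set y : ℝ := -Qg / V₀ with hydef
    have hxV : V₀ * x = ε * s - V₀ ^ 2 / 2 := by
      rw [hxdef]; field_simp
    have hyV : V₀ * y = -Qg := by
      rw [hydef]; field_simp
    have hx2 : (V₀ * x) ^ 2 = (ε * s - V₀ ^ 2 / 2) ^ 2 := by rw [hxV]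
    have hy2 : (V₀ * y) ^ 2 = Qg ^ 2 := by rw [hyV]; ring
    have hmain : (V₀ + x) * x + y * y = Pg := by
      have h2 : V₀ ^ 2 * ((V₀ + x) * x + y * y) = V₀ ^ 2 * Pg := by
        linear_combination hx2 + hy2 + V₀ ^ 2 * hxV + hsq + s ^ 2 * hε2
      exact mul_left_cancel₀ hV₀2 h2
    have himag : -((V₀ + x) * y) + y * x = Qg := by linear_combination -hyV
    have hVg2 : (V₀ + x) ^ 2 + y ^ 2 = (Pg + V₀ ^ 2 / 2) + ε * s := by
      have h2 : V₀ ^ 2 * ((V₀ + x) ^ 2 + y ^ 2)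
          = V₀ ^ 2 * ((Pg + V₀ ^ 2 / 2) + ε * s) := by
        linear_combination hx2 + hy2 + 2 * V₀ ^ 2 * hxV + hsq + s ^ 2 * hε2
      exact mul_left_cancel₀ hV₀2 h2
    have hJ2 : x ^ 2 + y ^ 2 = (Pg + V₀ ^ 2 / 2) - ε * s := by
      have h2 : V₀ ^ 2 * (x ^ 2 + y ^ 2)
          = V₀ ^ 2 * ((Pg + V₀ ^ 2 / 2) - ε * s) := by
        linear_combination hx2 + hy2 + hsq + s ^ 2 * hε2
      exact mul_left_cancel₀ hV₀2 h2
    refine ⟨(V₀ : ℂ) + ((x : ℂ) + (y : ℂ) * Complex.I),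
        (x : ℂ) + (y : ℂ) * Complex.I, rfl, ?_, ?_, ?_⟩
    · apply Complex.ext
      · simp [Complex.mul_re, Complex.mul_im, Complex.add_re, Complex.add_im]
        linear_combination hmain
      · simp [Complex.mul_re, Complex.mul_im, Complex.add_re, Complex.add_im]
        linear_combination himag
    · rw [Complex.sq_norm, Complex.normSq_apply]
      simp [Complex.add_re, Complex.add_im, Complex.mul_re, Complex.mul_im]
      linear_combination hVg2
    · rw [Complex.sq_norm, Complex.normSq_apply]
      simp [Complex.add_re, Complex.add_im, Complex.mul_re, Complex.mul_im]
      linear_combination hJ2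
end

section
/- Fix V₀ > 0 and P̃_g, Q̃_g ∈ ℝ. Every power-flow solution (V_g, J) satisfies the quartic identity |V_g|⁴ − (V₀² + 2·P̃_g)·|V_g|² + P̃_g² + Q̃_g² = 0; in other words, |V_g|² is a root of x² − (V₀² + 2·P̃_g)·x + (P̃_g² + Q̃_g²) = 0. -/
/-- Every two-bus power-flow solution satisfies the quartic identity
`|Vg|⁴ − (V₀² + 2·P̃g)·|Vg|² + P̃g² + Q̃g² = 0`; i.e. `|Vg|²` is a root of
`x² − (V₀² + 2·P̃g)·x + (P̃g² + Q̃g²)`. -/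
theorem powerflow_voltage_quartic_identity
    (V₀ Pg Qg : ℝ) (hV₀ : 0 < V₀)
    (Vg J : ℂ) (hKVL : Vg = (V₀ : ℂ) + J)
    (hS : Vg * (starRingEnd ℂ) J = (Pg : ℂ) + (Qg : ℂ) * Complex.I) :
    ‖Vg‖ ^ 4 - (V₀ ^ 2 + 2 * Pg) * ‖Vg‖ ^ 2
        + Pg ^ 2 + Qg ^ 2 = 0 ∧
      (‖Vg‖ ^ 2) ^ 2 - (V₀ ^ 2 + 2 * Pg) * (‖Vg‖ ^ 2)
        + (Pg ^ 2 + Qg ^ 2) = 0 := by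
  subst hKVL
  rw [Complex.ext_iff] at hS
  obtain ⟨h1, h2⟩ := hS
  have h4 : ‖(V₀ : ℂ) + J‖ ^ 4 = (‖(V₀ : ℂ) + J‖ ^ 2) ^ 2 := by
    ring
  rw [h4]
  simp only [Complex.sq_norm, Complex.normSq_apply, Complex.add_re, Complex.add_im,
    Complex.mul_re, Complex.mul_im, Complex.ofReal_re, Complex.ofReal_im,
    Complex.conj_re, Complex.conj_im, Complex.I_re, Complex.I_im] at h1 h2 ⊢
  have hP : Pg = (V₀ + J.re) * J.re + J.im * J.im := by linarith
  have hQ : Qg = (V₀ + J.re) * -J.im + J.im * J.re := by linarith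
  subst hP; subst hQ
  constructor <;> ring
end

section
/- Fix V₀ > 0, V₊ > 0 and P̃_g, Q̃_g ∈ ℝ. There exists a power-flow solution (V_g, J) with |V_g| = V₊ if and only if (P̃_g − V₊²)² + Q̃_g² = V₀²·V₊²; that is, the set of rotated generator powers admitting a solution at voltage magnitude V₊ is exactly the circle of radius V₀·V₊ centred at (V₊², 0) in the (P̃_g, Q̃_g)-plane. -/
/-- A two-bus power-flow solution with generator-bus voltage magnitude `V₊`
exists iff `(P̃g − V₊²)² + Q̃g² = V₀²·V₊²`, i.e. the rotated powers lie on the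
circle of radius `V₀·V₊` centred at `(V₊², 0)`. -/
theorem powerflow_solution_at_voltage_iff_circle
    (V₀ Vp Pg Qg : ℝ) (hV₀ : 0 < V₀) (hVp : 0 < Vp) :
    (∃ Vg J : ℂ, Vg = (V₀ : ℂ) + J ∧
        Vg * (starRingEnd ℂ) J = (Pg : ℂ) + (Qg : ℂ) * Complex.I ∧
        ‖Vg‖ = Vp) ↔
      (Pg - Vp ^ 2) ^ 2 + Qg ^ 2 = V₀ ^ 2 * Vp ^ 2 := by
  constructor
  · rintro ⟨Vg, J, hJ, hS, habs⟩
    have hJ' : J = Vg - (V₀ : ℂ) := by rw [hJ]; ring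
    rw [hJ'] at hS
    have hsq : Vg * (starRingEnd ℂ) Vg = ((Vp ^ 2 : ℝ) : ℂ) := by
      rw [Complex.mul_conj]
      norm_cast
      rw [Complex.normSq_eq_norm_sq, habs]
    have h2 : ((Vp ^ 2 : ℝ) : ℂ) - (V₀ : ℂ) * Vg = (Pg : ℂ) + (Qg : ℂ) * Complex.I := by
      rw [← hS]
      simp [map_sub, mul_sub, hsq]
      ring
    have hre := congrArg Complex.re h2
    have him := congrArg Complex.im h2
    simp only [Complex.sub_re, Complex.sub_im, Complex.ofReal_re, Complex.ofReal_im,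
      Complex.add_re, Complex.add_im, Complex.mul_re, Complex.mul_im,
      Complex.I_re, Complex.I_im, mul_zero, mul_one, zero_mul, sub_zero, zero_sub,
      zero_add, add_zero] at hre him
    have habs2 : Vg.re ^ 2 + Vg.im ^ 2 = Vp ^ 2 := by
      have := Complex.sq_norm Vg
      rw [habs, Complex.normSq_apply] at this
      nlinarith [this]
    calc (Pg - Vp ^ 2) ^ 2 + Qg ^ 2 = (V₀ * Vg.re) ^ 2 + (V₀ * Vg.im) ^ 2 := by
          rw [← hre, ← him]; ring
      _ = V₀ ^ 2 * Vp ^ 2 := by rw [← habs2]; ring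
  · intro h
    set a := (Vp ^ 2 - Pg) / V₀ with ha
    set b := -Qg / V₀ with hb
    refine ⟨⟨a, b⟩, ⟨a, b⟩ - (V₀ : ℂ), by ring, ?_, ?_⟩
    · have hV₀' : (V₀ : ℝ) ≠ 0 := ne_of_gt hV₀
      apply Complex.ext <;>
        simp [Complex.mul_re, Complex.mul_im, Complex.sub_re, Complex.sub_im, ha, hb] <;>
        field_simp <;> nlinarith [h]
    · have habs2 : a ^ 2 + b ^ 2 = Vp ^ 2 := by
        have hV₀' : (V₀ : ℝ) ≠ 0 := ne_of_gt hV₀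
        rw [ha, hb]; field_simp
        nlinarith [h]
      have : ‖(⟨a, b⟩ : ℂ)‖ = Real.sqrt (a ^ 2 + b ^ 2) := by
        rw [Complex.norm_def, Complex.normSq_apply]; ring_nf
      rw [this, habs2, Real.sqrt_sq hVp.le]
end

section
/- Fix V₀ > 0 and line parameters R > 0, X > 0 with |Z| := √(R² + X²). For every M ∈ ℝ there exist P̃_g > 0 and a power-flow solution (V_g, J) for the rotated power S̃_g = P̃_g + i·0 (zero rotated reactive power) whose delivered real power P₀ := (R·(P̃_g − |J|²) − X·0)/|Z|² exceeds M. Hence, in the absence of operational constraints, the real power transferred from the generator to the grid is unbounded. -/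
/-- Without operational constraints, the real power delivered to the grid is
unbounded: for any `M` there is a rotated power `P̃g > 0` (with zero rotated
reactive power) and a power-flow solution whose delivered real power
`(R·(P̃g − |J|²) − X·0)/|Z|²` exceeds `M`. -/
theorem powerflow_delivered_power_unbounded
    (V₀ R X : ℝ) (hV₀ : 0 < V₀) (hR : 0 < R) (hX : 0 < X) :
    ∀ M : ℝ, ∃ (Pg : ℝ) (Vg J : ℂ), 0 < Pg ∧
      Vg = (V₀ : ℂ) + J ∧
      Vg * (starRingEnd ℂ) J = (Pg : ℂ) + (0 : ℝ) * Complex.I ∧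
      M < (R * (Pg - ‖J‖ ^ 2) - X * 0) / Real.sqrt (R ^ 2 + X ^ 2) ^ 2 := by
  intro M
  have hZ : (0:ℝ) < R ^ 2 + X ^ 2 := by positivity
  set t : ℝ := max 1 ((M + 1) * (R ^ 2 + X ^ 2) / (R * V₀)) with ht
  have ht1 : (1:ℝ) ≤ t := le_max_left _ _
  have htpos : (0:ℝ) < t := lt_of_lt_of_le one_pos ht1
  refine ⟨(V₀ + t) * t, (V₀ : ℂ) + (t : ℂ), (t : ℂ), ?_, rfl, ?_, ?_⟩
  · positivity
  · simp [Complex.conj_ofReal]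
  · have habs : ‖(t : ℂ)‖ = t := by
      rw [Complex.norm_real, Real.norm_eq_abs, abs_of_pos htpos]
    rw [habs, Real.sq_sqrt hZ.le]
    have hnum : R * ((V₀ + t) * t - t ^ 2) - X * 0 = R * V₀ * t := by ring
    rw [hnum]
    rw [lt_div_iff₀ hZ]
    have h2 : (M + 1) * (R ^ 2 + X ^ 2) / (R * V₀) ≤ t := le_max_right _ _
    have hRV : (0:ℝ) < R * V₀ := by positivity
    calc M * (R ^ 2 + X ^ 2) < (M + 1) * (R ^ 2 + X ^ 2) := by nlinarith
      _ = (M + 1) * (R ^ 2 + X ^ 2) / (R * V₀) * (R * V₀) := by field_simp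
      _ ≤ t * (R * V₀) := by nlinarith
      _ = R * V₀ * t := by ring
end

section
/- Fix V₀ > 0, R > 0, X > 0, |Z| := √(R² + X²), and P̃_g, Q̃_g ∈ ℝ with Q̃_g ≤ 0 and zero discriminant, D := V₀⁴/4 + V₀²·P̃_g − Q̃_g² = 0 (the solution boundary). Then any power-flow solution (V_g, J) satisfies |V_g|² = P̃_g + V₀²/2 ≥ V₀²/4, and its delivered real power P₀ := (R·(P̃_g − |J|²) − X·Q̃_g)/|Z|² equals (V₀²/|Z|)·(−R/(2|Z|) + (X/|Z|)·√(|V_g|²/V₀² − 1/4)). -/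
/-- On the solution boundary (zero discriminant, with `Q̃g ≤ 0`), every
power-flow solution has `|Vg|² = P̃g + V₀²/2 ≥ V₀²/4`, and its delivered real
power equals `(V₀²/|Z|)·(−R/(2|Z|) + (X/|Z|)·√(|Vg|²/V₀² − 1/4))`. -/
theorem powerflow_boundary_delivered_power
    (V₀ R X Pg Qg : ℝ) (hV₀ : 0 < V₀) (hR : 0 < R) (hX : 0 < X)
    (hQ : Qg ≤ 0)
    (hD : V₀ ^ 4 / 4 + V₀ ^ 2 * Pg - Qg ^ 2 = 0)
    (Vg J : ℂ) (hKVL : Vg = (V₀ : ℂ) + J)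
    (hS : Vg * (starRingEnd ℂ) J = (Pg : ℂ) + (Qg : ℂ) * Complex.I) :
    ‖Vg‖ ^ 2 = Pg + V₀ ^ 2 / 2 ∧
      V₀ ^ 2 / 4 ≤ ‖Vg‖ ^ 2 ∧
      (R * (Pg - ‖J‖ ^ 2) - X * Qg) / Real.sqrt (R ^ 2 + X ^ 2) ^ 2 =
        (V₀ ^ 2 / Real.sqrt (R ^ 2 + X ^ 2)) *
          (-(R / (2 * Real.sqrt (R ^ 2 + X ^ 2))) +
            (X / Real.sqrt (R ^ 2 + X ^ 2)) *
              Real.sqrt (‖Vg‖ ^ 2 / V₀ ^ 2 - 1 / 4)) := by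
  subst hKVL
  set a := J.re with ha
  set b := J.im with hb
  have hre : (V₀ + a) * a + b * b = Pg := by
    have := congrArg Complex.re hS
    simpa [Complex.add_re, Complex.mul_re, Complex.conj_re, Complex.conj_im] using this
  have him : -(V₀ * b) = Qg := by
    have := congrArg Complex.im hS
    simp [Complex.add_im, Complex.mul_im, Complex.conj_re, Complex.conj_im] at this
    linarith
  have hJ2 : ‖J‖ ^ 2 = a ^ 2 + b ^ 2 := by
    rw [Complex.sq_norm, Complex.normSq_apply]; ring
  have hV2 : ‖((V₀ : ℂ) + J)‖ ^ 2 = (V₀ + a) ^ 2 + b ^ 2 := by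
    rw [Complex.sq_norm, Complex.normSq_apply]
    simp [Complex.add_re, Complex.add_im]
    ring
  -- |J|² = Pg + V₀²/2
  have key : a ^ 2 + b ^ 2 = Pg + V₀ ^ 2 / 2 := by
    have hsq : (a ^ 2 + b ^ 2 - (Pg + V₀ ^ 2 / 2)) ^ 2 = 0 := by
      nlinarith [sq_nonneg V₀, sq_nonneg b, sq_nonneg a]
    have := pow_eq_zero_iff (n := 2) (by norm_num) |>.mp hsq
    linarith
  have hVg2 : ‖((V₀ : ℂ) + J)‖ ^ 2 = Pg + V₀ ^ 2 / 2 := by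
    rw [hV2]
    nlinarith [key]
  refine ⟨hVg2, ?_, ?_⟩
  · rw [hVg2]; nlinarith [sq_nonneg Qg, sq_nonneg V₀, hV₀]
  · have hZ : (0:ℝ) < Real.sqrt (R ^ 2 + X ^ 2) := Real.sqrt_pos.mpr (by positivity)
    have hZ2 : Real.sqrt (R ^ 2 + X ^ 2) ^ 2 = R ^ 2 + X ^ 2 :=
      Real.sq_sqrt (by positivity)
    have hsqrt : Real.sqrt (‖((V₀:ℂ) + J)‖ ^ 2 / V₀ ^ 2 - 1 / 4) = -Qg / V₀ ^ 2 := by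
      have harg : ‖((V₀:ℂ) + J)‖ ^ 2 / V₀ ^ 2 - 1 / 4 = (-Qg / V₀ ^ 2) ^ 2 := by
        rw [hVg2]
        field_simp
        linear_combination 8 * hD
      rw [harg, Real.sqrt_sq (div_nonneg (neg_nonneg.2 hQ) (by positivity))]
    rw [hsqrt, hJ2, key, hZ2]
    field_simp
    linear_combination (-(R * V₀ ^ 2) - 2 * X * Qg) * hZ2
end

section
/- (Thermal loss-induced limit, Lemma 1.) Fix V₀ > 0, V₊ > 0, R > 0, X > 0, |Z| := √(R² + X²), a current limit I₊ > 0, and set P̂ := (V₊² − V₀² + |Z|²·I₊²)/2. Assume V₊² − V₀·V₊ ≤ P̂ ≤ V₊² + V₀·V₊. Then over all (P̃_g, Q̃_g) ∈ ℝ² on the voltage locus (P̃_g − V₊²)² + Q̃_g² = V₀²·V₊² satisfying the thermal constraint V₀² + 2·P̃_g − V₊² ≤ |Z|²·I₊² (the rotated loss of the solution at voltage V₊ does not exceed |Z|²·I₊²), the maximum of P̃_g equals P̂, attained exactly at Q̃_g = ±√((V₊·I₊·|Z|)² − P̂²). Moreover, at the point (P̂, Q̂) with Q̂ := −√((V₊·I₊·|Z|)²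 − P̂²), the delivered real power equals P_g − I₊²·R, where P_g := (R·P̂ − X·Q̂)/|Z|². -/
/-- Thermal loss-induced limit (Lemma 1): on the voltage locus
`(P̃g − V₊²)² + Q̃g² = V₀²·V₊²` subject to the thermal constraint
`V₀² + 2·P̃g − V₊² ≤ |Z|²·I₊²`, the maximum of `P̃g` is
`P̂ = (V₊² − V₀² + |Z|²·I₊²)/2`, attained exactly at
`Q̃g = ±√((V₊·I₊·|Z|)² − P̂²)`; at `(P̂, Q̂)` with the negative root `Q̂`, the
delivered real power equals `P_g − I₊²·R`. -/
theorem thermal_loss_induced_limit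
    (V₀ Vp R X Ip Phat : ℝ) (hV₀ : 0 < V₀) (hVp : 0 < Vp)
    (hR : 0 < R) (hX : 0 < X) (hIp : 0 < Ip)
    (hPhat : Phat =
      (Vp ^ 2 - V₀ ^ 2 + Real.sqrt (R ^ 2 + X ^ 2) ^ 2 * Ip ^ 2) / 2)
    (hlo : Vp ^ 2 - V₀ * Vp ≤ Phat) (hhi : Phat ≤ Vp ^ 2 + V₀ * Vp) :
    IsGreatest
        {p : ℝ | ∃ q : ℝ, (p - Vp ^ 2) ^ 2 + q ^ 2 = V₀ ^ 2 * Vp ^ 2 ∧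
          V₀ ^ 2 + 2 * p - Vp ^ 2 ≤ Real.sqrt (R ^ 2 + X ^ 2) ^ 2 * Ip ^ 2}
        Phat ∧
      (∀ q : ℝ,
        ((Phat - Vp ^ 2) ^ 2 + q ^ 2 = V₀ ^ 2 * Vp ^ 2 ∧
            V₀ ^ 2 + 2 * Phat - Vp ^ 2 ≤ Real.sqrt (R ^ 2 + X ^ 2) ^ 2 * Ip ^ 2) ↔
          (q = Real.sqrt ((Vp * Ip * Real.sqrt (R ^ 2 + X ^ 2)) ^ 2 - Phat ^ 2) ∨
            q = -Real.sqrt ((Vp * Ip * Real.sqrt (R ^ 2 + X ^ 2)) ^ 2 - Phat ^ 2))) ∧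
      ((R * Phat -
          X * (-Real.sqrt ((Vp * Ip * Real.sqrt (R ^ 2 + X ^ 2)) ^ 2 - Phat ^ 2))) /
            Real.sqrt (R ^ 2 + X ^ 2) ^ 2 -
          R * (V₀ ^ 2 + 2 * Phat - Vp ^ 2) / Real.sqrt (R ^ 2 + X ^ 2) ^ 2 =
        (R * Phat -
          X * (-Real.sqrt ((Vp * Ip * Real.sqrt (R ^ 2 + X ^ 2)) ^ 2 - Phat ^ 2))) /
            Real.sqrt (R ^ 2 + X ^ 2) ^ 2 - Ip ^ 2 * R) := by
  have hZ2 : Real.sqrt (R ^ 2 + X ^ 2) ^ 2 = R ^ 2 + X ^ 2 :=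
    Real.sq_sqrt (by positivity)
  set D : ℝ := (Vp * Ip * Real.sqrt (R ^ 2 + X ^ 2)) ^ 2 - Phat ^ 2 with hDdef
  have hDeq : D = V₀ ^ 2 * Vp ^ 2 - (Phat - Vp ^ 2) ^ 2 := by
    have : (Vp * Ip * Real.sqrt (R ^ 2 + X ^ 2)) ^ 2
        = Vp ^ 2 * Ip ^ 2 * (R ^ 2 + X ^ 2) := by
      rw [mul_pow, mul_pow, hZ2]
    rw [hDdef, this]
    nlinarith [hPhat, hZ2]
  have hDnn : 0 ≤ D := by
    rw [hDeq]
    nlinarith [mul_nonneg (by nlinarith : (0:ℝ) ≤ V₀ * Vp - (Phat - Vp ^ 2))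
      (by nlinarith : (0:ℝ) ≤ V₀ * Vp + (Phat - Vp ^ 2))]
  have hsq : Real.sqrt D ^ 2 = D := Real.sq_sqrt hDnn
  have hth : V₀ ^ 2 + 2 * Phat - Vp ^ 2 = Real.sqrt (R ^ 2 + X ^ 2) ^ 2 * Ip ^ 2 := by
    rw [hZ2] at hPhat ⊢; linarith
  refine ⟨⟨⟨Real.sqrt D, by rw [hsq, hDeq]; ring, le_of_eq hth⟩, ?_⟩, ?_, ?_⟩
  · rintro p ⟨q, _, hle⟩
    rw [hZ2] at hle hPhat; linarith
  · intro q
    constructor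
    · rintro ⟨hc, -⟩
      have hq2 : q ^ 2 = D := by rw [hDeq]; linarith
      have habs : |q| = Real.sqrt D := by
        rw [← Real.sqrt_sq_eq_abs, hq2]
      rcases abs_eq (Real.sqrt_nonneg D) |>.mp habs with h | h
      · exact Or.inl h
      · exact Or.inr h
    · have h2 : (-Real.sqrt D) ^ 2 = D := by
        rw [show (-Real.sqrt D) ^ 2 = Real.sqrt D ^ 2 by ring, hsq]
      rintro (rfl | rfl)
      · exact ⟨by rw [hsq, hDeq]; ring, le_of_eq hth⟩
      · exact ⟨by rw [h2, hDeq]; ring, le_of_eq hth⟩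
  · rw [hth, hZ2]
    field_simp
end

section
/- (Marginal loss-induced maximum power transfer, Theorem 1, voltage-constrained case.) Fix V₀ > 0, V₊ > 0, R > 0, X > 0, |Z| := √(R² + X²). For (P̃, Q̃) ∈ ℝ² on the voltage locus (P̃ − V₊²)² + Q̃² = V₀²·V₊², define the delivered real power P₀(P̃, Q̃) := (R·(V₊² − V₀²) − R·P̃ − X·Q̃)/|Z|². Then P₀(P̃, Q̃) ≤ (V₀/|Z|)·(V₊ − V₀·R/|Z|), with equality if and only if (P̃, Q̃) = (P̃′, Q̃′) where P̃′ := V₊·(V₊ − V₀·R/|Z|) and Q̃′ := −V₀·V₊·X/|Z|. Equivalently, with λ := R/X, the maximum delivered power is P₀′ = (V₀²/|Z|)·(V₊/V₀ − λ/√(1 + λ²)). -/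
/-- Marginal loss-induced maximum power transfer (Theorem 1, voltage-constrained
case): on the voltage locus `(P̃ − V₊²)² + Q̃² = V₀²·V₊²` the delivered real
power `P₀(P̃, Q̃) = (R·(V₊² − V₀²) − R·P̃ − X·Q̃)/|Z|²` is at most
`(V₀/|Z|)·(V₊ − V₀·R/|Z|)`, with equality exactly at
`(P̃′, Q̃′) = (V₊·(V₊ − V₀·R/|Z|), −V₀·V₊·X/|Z|)`; equivalently, with `λ = R/X`
the maximum is `(V₀²/|Z|)·(V₊/V₀ − λ/√(1 + λ²))`. -/
theorem marginal_loss_induced_max_power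
    (V₀ Vp R X : ℝ) (hV₀ : 0 < V₀) (hVp : 0 < Vp) (hR : 0 < R) (hX : 0 < X) :
    (∀ P Q : ℝ, (P - Vp ^ 2) ^ 2 + Q ^ 2 = V₀ ^ 2 * Vp ^ 2 →
        ((R * (Vp ^ 2 - V₀ ^ 2) - R * P - X * Q) / Real.sqrt (R ^ 2 + X ^ 2) ^ 2 ≤
            (V₀ / Real.sqrt (R ^ 2 + X ^ 2)) *
              (Vp - V₀ * R / Real.sqrt (R ^ 2 + X ^ 2)) ∧
          ((R * (Vp ^ 2 - V₀ ^ 2) - R * P - X * Q) / Real.sqrt (R ^ 2 + X ^ 2) ^ 2 =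
              (V₀ / Real.sqrt (R ^ 2 + X ^ 2)) *
                (Vp - V₀ * R / Real.sqrt (R ^ 2 + X ^ 2)) ↔
            (P = Vp * (Vp - V₀ * R / Real.sqrt (R ^ 2 + X ^ 2)) ∧
              Q = -(V₀ * Vp * X / Real.sqrt (R ^ 2 + X ^ 2)))))) ∧
      (V₀ / Real.sqrt (R ^ 2 + X ^ 2)) *
          (Vp - V₀ * R / Real.sqrt (R ^ 2 + X ^ 2)) =
        (V₀ ^ 2 / Real.sqrt (R ^ 2 + X ^ 2)) *
          (Vp / V₀ - (R / X) / Real.sqrt (1 + (R / X) ^ 2)) := by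
  set Z := Real.sqrt (R ^ 2 + X ^ 2) with hZdef
  have hZ2 : Z ^ 2 = R ^ 2 + X ^ 2 := Real.sq_sqrt (by positivity)
  have hZpos : 0 < Z := Real.sqrt_pos.mpr (by positivity)
  have hZne : Z ≠ 0 := ne_of_gt hZpos
  have hRHS : (V₀ / Z) * (Vp - V₀ * R / Z) = (Z * V₀ * Vp - R * V₀ ^ 2) / Z ^ 2 := by
    field_simp
  constructor
  · intro P Q hc
    have key : -(Z * V₀ * Vp) ≤ R * (P - Vp ^ 2) + X * Q := by
      nlinarith [sq_nonneg (X * (P - Vp ^ 2) - R * Q),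
        sq_nonneg (R * (P - Vp ^ 2) + X * Q + Z * V₀ * Vp),
        mul_pos hZpos (mul_pos hV₀ hVp), hZ2]
    constructor
    · rw [hRHS, div_le_div_iff_of_pos_right (by positivity)]
      linarith
    · rw [hRHS, div_eq_div_iff (by positivity) (by positivity)]
      constructor
      · intro heq
        have hAB : R * (Vp ^ 2 - V₀ ^ 2) - R * P - X * Q = Z * V₀ * Vp - R * V₀ ^ 2 :=
          mul_right_cancel₀ (by positivity) heq
        have hs : R * (P - Vp ^ 2) + X * Q = -(Z * V₀ * Vp) := by linarith
        have hd0 : X * (P - Vp ^ 2) - R * Q = 0 := by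
          have hd : (X * (P - Vp ^ 2) - R * Q) ^ 2 = 0 := by
            linear_combination (R^2+X^2)*hc - (R*(P-Vp^2)+X*Q - Z*V₀*Vp)*hs - V₀^2*Vp^2*hZ2
          exact pow_eq_zero_iff (by norm_num) |>.mp hd
        have hP : Z * P = Z * Vp ^ 2 - R * V₀ * Vp := by
          have h1 : Z * (Z * P - (Z * Vp ^ 2 - R * V₀ * Vp)) = 0 := by
            linear_combination R*hs + X*hd0 + (P - Vp^2)*hZ2
          rcases mul_eq_zero.mp h1 with h | h
          · exact absurd h hZne
          · linarith
        have hQ : Z * Q = -(X * V₀ * Vp) := by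
          have h1 : Z * (Z * Q + X * V₀ * Vp) = 0 := by
            linear_combination X*hs - R*hd0 + Q*hZ2
          rcases mul_eq_zero.mp h1 with h | h
          · exact absurd h hZne
          · linarith
        constructor
        · field_simp
          linear_combination hP
        · field_simp
          linear_combination hQ
      · rintro ⟨hP, hQ⟩
        have hP' : Z * P = Z * Vp ^ 2 - Vp * (V₀ * R) := by
          rw [hP]; field_simp
        have hQ' : Z * Q = -(V₀ * Vp * X) := by
          rw [hQ]; field_simp
        linear_combination (-R*Z)*hP' + (-X*Z)*hQ' + (-Z*V₀*Vp)*hZ2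
  · have hs : Real.sqrt (1 + (R / X) ^ 2) = Z / X := by
      have h1 : 1 + (R / X) ^ 2 = (Z / X) ^ 2 := by
        field_simp
        linarith [hZ2]
      rw [h1, Real.sqrt_sq (by positivity)]
    have h3 : (R / X) / (Z / X) = R / Z := by
      rw [div_div_div_eq]
      rw [mul_comm X Z, mul_div_mul_right _ _ (ne_of_gt hX)]
    rw [hs, h3, hRHS]
    field_simp
end

section
/- (Theorem 1, with voltage and thermal constraints.) Fix V₀ > 0, V₊ > 0, R > 0, X > 0, |Z| := √(R² + X²), I₊ > 0, and set P̂ := (V₊² − V₀² + |Z|²·I₊²)/2, P̃′ := V₊·(V₊ − V₀·R/|Z|), Q̃′ := −V₀·V₊·X/|Z|. Assume the feasible arc is nonempty, i.e. P̂ ≥ V₊² − V₀·V₊. Consider maximising the delivered real power P₀(P̃, Q̃) := (R·(V₊² − V₀²) − R·P̃ − X·Q̃)/|Z|² over all (P̃, Q̃) with (P̃ − V₊²)² + Q̃² = V₀²·V₊² and P̃ ≤ P̂. If P̃′ ≤ P̂, the maximum is attained at (P̃′, Q̃′) with value (V₀/|Z|)·(V₊ − V₀·R/|Z|); if P̂ <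 P̃′, the maximum is attained at (P̂, −√(V₀²·V₊² − (P̂ − V₊²)²)). In both cases the optimal P̃ equals min{P̂, P̃′}. -/
set_option maxHeartbeats 1000000

lemma cs_circle (R X s r a Q : ℝ) (hs : s^2 = R^2 + X^2) (hs0 : 0 < s)
    (hr : 0 ≤ r) (hc : a^2 + Q^2 = r^2) : -(R*a + X*Q) ≤ s*r := by
  have hid : (R*a + X*Q)^2 + (X*a - R*Q)^2 = s^2*r^2 := by
    linear_combination -(a^2+Q^2)*hs + s^2*hc
  have h : (R*a + X*Q)^2 ≤ (s*r)^2 := by nlinarith [sq_nonneg (X*a - R*Q)]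
  rcases le_or_gt (-(R*a + X*Q)) 0 with h0 | h0
  · exact le_trans h0 (mul_nonneg hs0.le hr)
  · have := le_of_pow_le_pow_left₀ two_ne_zero (mul_nonneg hs0.le hr)
      (by calc (-(R*a + X*Q))^2 = (R*a + X*Q)^2 := by ring
        _ ≤ (s*r)^2 := h)
    linarith

lemma mono_strict (R X s r a b : ℝ) (hR : 0 < R) (hX : 0 < X)
    (hs : s^2 = R^2 + X^2) (hs0 : 0 < s) (hr : 0 < r)
    (ha2 : a^2 ≤ r^2) (hb2 : b^2 ≤ r^2) (hab : a < b) (hb : b ≤ -(r*R)/s) :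
    -(R*a) + X*Real.sqrt (r^2 - a^2) < -(R*b) + X*Real.sqrt (r^2 - b^2) := by
  set u := Real.sqrt (r^2 - a^2) with hudef
  set v := Real.sqrt (r^2 - b^2) with hvdef
  have hu : u^2 = r^2 - a^2 := Real.sq_sqrt (by linarith)
  have hv : v^2 = r^2 - b^2 := Real.sq_sqrt (by linarith)
  have hu0 : 0 ≤ u := Real.sqrt_nonneg _
  have hv0 : 0 ≤ v := Real.sqrt_nonneg _
  have hrRs : 0 < r*R/s := by positivity
  have hbneg : b < 0 := by
    have : -(r*R)/s < 0 := by rw [neg_div]; linarith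
    linarith
  have haneg : a < 0 := lt_trans hab hbneg
  have has : a*s < -(r*R) := (lt_div_iff₀ hs0).mp (lt_of_lt_of_le hab hb)
  have hbs : b*s ≤ -(r*R) := (le_div_iff₀ hs0).mp hb
  have hasq : r^2*R^2 < a^2*s^2 := by nlinarith [mul_pos hr hR]
  have hbsq : r^2*R^2 ≤ b^2*s^2 := by nlinarith [mul_pos hr hR]
  have h1sq : (R*u)^2 < (X*a)^2 := by nlinarith [hasq, hu, hs, sq_nonneg a]
  have h2sq : (R*v)^2 ≤ (X*b)^2 := by nlinarith [hbsq, hv, hs, sq_nonneg b]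
  have h1 : R*u < -(X*a) := by
    refine lt_of_pow_lt_pow_left₀ 2 (by linarith [mul_pos hX (neg_pos.mpr haneg)]) ?_
    calc (R*u)^2 < (X*a)^2 := h1sq
      _ = (-(X*a))^2 := by ring
  have h2 : R*v ≤ -(X*b) := by
    refine le_of_pow_le_pow_left₀ two_ne_zero (by linarith [mul_pos hX (neg_pos.mpr hbneg)]) ?_
    calc (R*v)^2 ≤ (X*b)^2 := h2sq
      _ = (-(X*b))^2 := by ring
  rcases eq_or_lt_of_le (by positivity : (0:ℝ) ≤ u + v) with huv | huv
  · exfalso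
    have hu0' : u = 0 := le_antisymm (by linarith) hu0
    have hv0' : v = 0 := le_antisymm (by linarith) hv0
    rw [hu0'] at hu; rw [hv0'] at hv
    have ha' : a^2 = r^2 := by linarith [hu]
    have hb' : b^2 = r^2 := by linarith [hv]
    nlinarith [mul_pos (sub_pos.2 hab) (show 0 < -(a+b) by linarith), ha', hb']
  · have key : R*(u+v) < -(X*(a+b)) := by linarith
    have hexp : X*(v-u)*(u+v) = X*(a^2 - b^2) := by linear_combination X*hv - X*hu
    have hmul : (R*(b-a))*(u+v) < (X*(v-u))*(u+v) := by
      have h3 := mul_lt_mul_of_pos_left key (sub_pos.2 hab)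
      nlinarith [h3, hexp]
    have := lt_of_mul_lt_mul_right hmul (by linarith)
    linarith

lemma mono_le (R X s r a b : ℝ) (hR : 0 < R) (hX : 0 < X)
    (hs : s^2 = R^2 + X^2) (hs0 : 0 < s) (hr : 0 < r)
    (ha2 : a^2 ≤ r^2) (hb2 : b^2 ≤ r^2) (hab : a ≤ b) (hb : b ≤ -(r*R)/s) :
    -(R*a) + X*Real.sqrt (r^2 - a^2) ≤ -(R*b) + X*Real.sqrt (r^2 - b^2) := by
  rcases eq_or_lt_of_le hab with h | h
  · subst h; exact le_rfl
  · exact (mono_strict R X s r a b hR hX hs hs0 hr ha2 hb2 h hb).le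


/-- Theorem 1 with voltage and thermal constraints: maximising the delivered
real power over the voltage locus intersected with the thermal constraint
`P̃ ≤ P̂`, the maximum is attained at `(P̃′, Q̃′)` (with value
`(V₀/|Z|)·(V₊ − V₀·R/|Z|)`) when `P̃′ ≤ P̂`, and at
`(P̂, −√(V₀²·V₊² − (P̂ − V₊²)²))` when `P̂ < P̃′`; in both cases the optimal
`P̃` equals `min{P̂, P̃′}`. -/
theorem loss_induced_max_power_with_thermal
    (V₀ Vp R X Ip Phat : ℝ) (hV₀ : 0 < V₀) (hVp : 0 < Vp)
    (hR : 0 < R) (hX : 0 < X) (hIp : 0 < Ip)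
    (hPhat : Phat =
      (Vp ^ 2 - V₀ ^ 2 + Real.sqrt (R ^ 2 + X ^ 2) ^ 2 * Ip ^ 2) / 2)
    (hfeas : Vp ^ 2 - V₀ * Vp ≤ Phat) :
    (Vp * (Vp - V₀ * R / Real.sqrt (R ^ 2 + X ^ 2)) ≤ Phat →
        IsGreatest
          {p₀ : ℝ | ∃ P Q : ℝ,
            (P - Vp ^ 2) ^ 2 + Q ^ 2 = V₀ ^ 2 * Vp ^ 2 ∧ P ≤ Phat ∧
            p₀ = (R * (Vp ^ 2 - V₀ ^ 2) - R * P - X * Q) /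
              Real.sqrt (R ^ 2 + X ^ 2) ^ 2}
          ((R * (Vp ^ 2 - V₀ ^ 2) -
              R * (Vp * (Vp - V₀ * R / Real.sqrt (R ^ 2 + X ^ 2))) -
              X * (-(V₀ * Vp * X / Real.sqrt (R ^ 2 + X ^ 2)))) /
            Real.sqrt (R ^ 2 + X ^ 2) ^ 2) ∧
        (R * (Vp ^ 2 - V₀ ^ 2) -
            R * (Vp * (Vp - V₀ * R / Real.sqrt (R ^ 2 + X ^ 2))) -
            X * (-(V₀ * Vp * X / Real.sqrt (R ^ 2 + X ^ 2)))) /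
          Real.sqrt (R ^ 2 + X ^ 2) ^ 2 =
          (V₀ / Real.sqrt (R ^ 2 + X ^ 2)) *
            (Vp - V₀ * R / Real.sqrt (R ^ 2 + X ^ 2))) ∧
      (Phat < Vp * (Vp - V₀ * R / Real.sqrt (R ^ 2 + X ^ 2)) →
        IsGreatest
          {p₀ : ℝ | ∃ P Q : ℝ,
            (P - Vp ^ 2) ^ 2 + Q ^ 2 = V₀ ^ 2 * Vp ^ 2 ∧ P ≤ Phat ∧
            p₀ = (R * (Vp ^ 2 - V₀ ^ 2) - R * P - X * Q) /
              Real.sqrt (R ^ 2 + X ^ 2) ^ 2}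
          ((R * (Vp ^ 2 - V₀ ^ 2) - R * Phat -
              X * (-Real.sqrt (V₀ ^ 2 * Vp ^ 2 - (Phat - Vp ^ 2) ^ 2))) /
            Real.sqrt (R ^ 2 + X ^ 2) ^ 2)) ∧
      (∀ P Q : ℝ,
        (P - Vp ^ 2) ^ 2 + Q ^ 2 = V₀ ^ 2 * Vp ^ 2 → P ≤ Phat →
        (∀ P' Q' : ℝ,
          (P' - Vp ^ 2) ^ 2 + Q' ^ 2 = V₀ ^ 2 * Vp ^ 2 → P' ≤ Phat →
          (R * (Vp ^ 2 - V₀ ^ 2) - R * P' - X * Q') /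
              Real.sqrt (R ^ 2 + X ^ 2) ^ 2 ≤
            (R * (Vp ^ 2 - V₀ ^ 2) - R * P - X * Q) /
              Real.sqrt (R ^ 2 + X ^ 2) ^ 2) →
        P = min Phat (Vp * (Vp - V₀ * R / Real.sqrt (R ^ 2 + X ^ 2)))) := by
  set s := Real.sqrt (R ^ 2 + X ^ 2) with hsdef
  have hs : s ^ 2 = R ^ 2 + X ^ 2 := Real.sq_sqrt (by positivity)
  have hs0 : 0 < s := Real.sqrt_pos.mpr (by positivity)
  have hs2 : (0:ℝ) < s ^ 2 := by positivity
  have hr : 0 < V₀ * Vp := mul_pos hV₀ hVp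
  have hPtshift : Vp * (Vp - V₀ * R / s) - Vp ^ 2 = -((V₀ * Vp) * R) / s := by
    field_simp; ring
  have hcircPt : (Vp * (Vp - V₀ * R / s) - Vp ^ 2) ^ 2 + (-(V₀ * Vp * X / s)) ^ 2
      = V₀ ^ 2 * Vp ^ 2 := by
    rw [hPtshift]
    field_simp
    linear_combination -hs
  have hnum : R * (Vp ^ 2 - V₀ ^ 2) - R * (Vp * (Vp - V₀ * R / s))
      - X * (-(V₀ * Vp * X / s))
      = R * (Vp ^ 2 - V₀ ^ 2) - R * Vp ^ 2 + s * (V₀ * Vp) := by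
    field_simp
    linear_combination -(V₀ * Vp) * hs
  have hub : ∀ P Q : ℝ, (P - Vp ^ 2) ^ 2 + Q ^ 2 = V₀ ^ 2 * Vp ^ 2 →
      R * (Vp ^ 2 - V₀ ^ 2) - R * P - X * Q ≤
      R * (Vp ^ 2 - V₀ ^ 2) - R * (Vp * (Vp - V₀ * R / s)) - X * (-(V₀ * Vp * X / s)) := by
    intro P Q hc
    have := cs_circle R X s (V₀ * Vp) (P - Vp ^ 2) Q hs hs0 hr.le
      (by linear_combination hc)
    rw [hnum]; linarith
  -- facts for the thermal-binding case
  have hD0 : ∀ _ : Phat < Vp * (Vp - V₀ * R / s),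
      0 ≤ V₀ ^ 2 * Vp ^ 2 - (Phat - Vp ^ 2) ^ 2 := by
    intro hlt
    have h1 : -(V₀ * Vp) ≤ Phat - Vp ^ 2 := by linarith
    have h2 : Phat - Vp ^ 2 < -((V₀ * Vp) * R) / s := by
      rw [← hPtshift]; linarith
    have h3 : -((V₀ * Vp) * R) / s < 0 := by
      rw [neg_div]
      have : 0 < (V₀ * Vp) * R / s := by positivity
      linarith
    nlinarith [mul_nonneg (show (0:ℝ) ≤ V₀ * Vp + (Phat - Vp ^ 2) by linarith)
      (show (0:ℝ) ≤ V₀ * Vp - (Phat - Vp ^ 2) by linarith)]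
  -- upper bound for numerator in the thermal-binding case
  have hub2 : ∀ _ : Phat < Vp * (Vp - V₀ * R / s), ∀ P Q : ℝ,
      (P - Vp ^ 2) ^ 2 + Q ^ 2 = V₀ ^ 2 * Vp ^ 2 → P ≤ Phat →
      R * (Vp ^ 2 - V₀ ^ 2) - R * P - X * Q ≤
      R * (Vp ^ 2 - V₀ ^ 2) - R * Phat -
        X * (-Real.sqrt (V₀ ^ 2 * Vp ^ 2 - (Phat - Vp ^ 2) ^ 2)) := by
    intro hlt P Q hc hP
    have hA : (V₀ * Vp) ^ 2 - (P - Vp ^ 2) ^ 2 = Q ^ 2 := by linear_combination -hc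
    have hQabs : Real.sqrt ((V₀ * Vp) ^ 2 - (P - Vp ^ 2) ^ 2) = |Q| := by
      rw [hA, Real.sqrt_sq_eq_abs]
    have hQ : -(X * Q) ≤ X * Real.sqrt ((V₀ * Vp) ^ 2 - (P - Vp ^ 2) ^ 2) := by
      rw [hQabs]
      have h' := mul_le_mul_of_nonneg_left (neg_le_abs Q) hX.le
      linarith [h']
    have hb : Phat - Vp ^ 2 ≤ -((V₀ * Vp) * R) / s := by
      rw [← hPtshift]; linarith
    have ha2 : (P - Vp ^ 2) ^ 2 ≤ (V₀ * Vp) ^ 2 := by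
      have := sq_nonneg Q; nlinarith [hc]
    have hb2 : (Phat - Vp ^ 2) ^ 2 ≤ (V₀ * Vp) ^ 2 := by
      have := hD0 hlt; nlinarith [this]
    have hmono := mono_le R X s (V₀ * Vp) (P - Vp ^ 2) (Phat - Vp ^ 2) hR hX hs hs0 hr
      ha2 hb2 (by linarith) hb
    have hDeq : (V₀ * Vp) ^ 2 - (Phat - Vp ^ 2) ^ 2
        = V₀ ^ 2 * Vp ^ 2 - (Phat - Vp ^ 2) ^ 2 := by ring
    rw [hDeq] at hmono
    linarith
  refine ⟨?_, ?_, ?_⟩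
  · -- Case 1
    intro hle
    constructor
    · constructor
      · exact ⟨Vp * (Vp - V₀ * R / s), -(V₀ * Vp * X / s), hcircPt, hle, rfl⟩
      · rintro p₀ ⟨P, Q, hc, hP, rfl⟩
        exact div_le_div_of_nonneg_right (hub P Q hc) hs2.le
    · rw [hnum]
      field_simp
      ring
  · -- Case 2
    intro hlt
    have hD := hD0 hlt
    have hsq := Real.sq_sqrt hD
    constructor
    · refine ⟨Phat, -Real.sqrt (V₀ ^ 2 * Vp ^ 2 - (Phat - Vp ^ 2) ^ 2), ?_, le_refl _, rfl⟩
      linear_combination hsq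
    · rintro p₀ ⟨P, Q, hc, hP, rfl⟩
      exact div_le_div_of_nonneg_right (hub2 hlt P Q hc hP) hs2.le
  · -- uniqueness of optimal P
    intro P Q hc hP hopt
    rcases le_or_gt (Vp * (Vp - V₀ * R / s)) Phat with hle | hlt
    · rw [min_eq_right hle]
      -- value at the optimum equals value at (Pt, Qt)
      have h1 := hopt (Vp * (Vp - V₀ * R / s)) (-(V₀ * Vp * X / s)) hcircPt hle
      have h2 : (R * (Vp ^ 2 - V₀ ^ 2) - R * P - X * Q) / s ^ 2 ≤
          (R * (Vp ^ 2 - V₀ ^ 2) - R * (Vp * (Vp - V₀ * R / s)) -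
            X * (-(V₀ * Vp * X / s))) / s ^ 2 :=
        div_le_div_of_nonneg_right (hub P Q hc) hs2.le
      have hveq : R * (Vp ^ 2 - V₀ ^ 2) - R * P - X * Q =
          R * (Vp ^ 2 - V₀ ^ 2) - R * (Vp * (Vp - V₀ * R / s)) -
            X * (-(V₀ * Vp * X / s)) :=
        le_antisymm (hub P Q hc) ((div_le_div_iff_of_pos_right hs2).mp h1)
      have heq : R * (P - Vp ^ 2) + X * Q = -(s * (V₀ * Vp)) := by
        rw [hnum] at hveq; linarith
      have hid : (R * (P - Vp ^ 2) + X * Q) ^ 2 + (X * (P - Vp ^ 2) - R * Q) ^ 2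
          = s ^ 2 * (V₀ * Vp) ^ 2 := by
        linear_combination -(((P - Vp ^ 2) ^ 2 + Q ^ 2)) * hs + s ^ 2 * hc
      have hz2 : (X * (P - Vp ^ 2) - R * Q) ^ 2 = 0 := by
        linear_combination hid - (R * (P - Vp ^ 2) + X * Q - s * (V₀ * Vp)) * heq
      have hz : X * (P - Vp ^ 2) - R * Q = 0 := by
        exact (pow_eq_zero_iff two_ne_zero).mp hz2
      -- deduce P
      have hPs : (P - Vp ^ 2) * s ^ 2 = -(s * (V₀ * Vp)) * R := by
        have e1 : R * (R * (P - Vp ^ 2) + X * Q) = R * (-(s * (V₀ * Vp))) := by rw [heq]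
        linear_combination e1 + X * hz + (P - Vp ^ 2) * hs
      have hPs' : (P - Vp ^ 2) * s = -(V₀ * Vp) * R := by
        have := mul_right_cancel₀ (ne_of_gt hs0)
          (show ((P - Vp ^ 2) * s) * s = (-(V₀ * Vp) * R) * s by linear_combination hPs)
        exact this
      have : P - Vp ^ 2 = -((V₀ * Vp) * R) / s := by
        rw [eq_div_iff (ne_of_gt hs0)]; linarith [hPs']
      rw [← hPtshift] at this
      linarith
    · rw [min_eq_left hlt.le]
      have hD := hD0 hlt
      have hsq := Real.sq_sqrt hD
      by_contra hne
      have hPlt : P < Phat := lt_of_le_of_ne hP hne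
      -- value at (Phat, -√D) is ≤ value at (P, Q)
      have h1 := hopt Phat (-Real.sqrt (V₀ ^ 2 * Vp ^ 2 - (Phat - Vp ^ 2) ^ 2))
        (by linear_combination hsq) (le_refl _)
      -- but strictly the other way
      have hA : (V₀ * Vp) ^ 2 - (P - Vp ^ 2) ^ 2 = Q ^ 2 := by linear_combination -hc
      have hQabs : Real.sqrt ((V₀ * Vp) ^ 2 - (P - Vp ^ 2) ^ 2) = |Q| := by
        rw [hA, Real.sqrt_sq_eq_abs]
      have hQ : -(X * Q) ≤ X * Real.sqrt ((V₀ * Vp) ^ 2 - (P - Vp ^ 2) ^ 2) := by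
        rw [hQabs]
        have h' := mul_le_mul_of_nonneg_left (neg_le_abs Q) hX.le
        linarith [h']
      have hb : Phat - Vp ^ 2 ≤ -((V₀ * Vp) * R) / s := by
        rw [← hPtshift]; linarith
      have ha2 : (P - Vp ^ 2) ^ 2 ≤ (V₀ * Vp) ^ 2 := by
        have := sq_nonneg Q; nlinarith [hc]
      have hb2 : (Phat - Vp ^ 2) ^ 2 ≤ (V₀ * Vp) ^ 2 := by nlinarith [hD]
      have hmono := mono_strict R X s (V₀ * Vp) (P - Vp ^ 2) (Phat - Vp ^ 2) hR hX hs hs0 hr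
        ha2 hb2 (by linarith) hb
      have hDeq : (V₀ * Vp) ^ 2 - (Phat - Vp ^ 2) ^ 2
          = V₀ ^ 2 * Vp ^ 2 - (Phat - Vp ^ 2) ^ 2 := by ring
      rw [hDeq] at hmono
      have hstrict : R * (Vp ^ 2 - V₀ ^ 2) - R * P - X * Q <
          R * (Vp ^ 2 - V₀ ^ 2) - R * Phat -
            X * (-Real.sqrt (V₀ ^ 2 * Vp ^ 2 - (Phat - Vp ^ 2) ^ 2)) := by
        linarith
      have h2 : (R * (Vp ^ 2 - V₀ ^ 2) - R * P - X * Q) / s ^ 2 <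
          (R * (Vp ^ 2 - V₀ ^ 2) - R * Phat -
            X * (-Real.sqrt (V₀ ^ 2 * Vp ^ 2 - (Phat - Vp ^ 2) ^ 2))) / s ^ 2 :=
        div_lt_div_of_pos_right hstrict hs2
      linarith
end

section
/- Fix V₀ > 0, V₊ > 0, R > 0, X > 0, |Z| := √(R² + X²), λ := R/X, and let P̃′ := V₊·(V₊ − V₀·R/|Z|), Q̃′ := −V₀·V₊·X/|Z| be the marginal loss-induced optimum on the voltage locus |V_g| = V₊. Then the discriminant at this point satisfies V₀⁴/4 + V₀²·P̃′ − (Q̃′)² = V₀²·(V₀/2 − V₊·R/|Z|)². Consequently, assuming 2·V₊ > V₀, the marginal optimum lies on the solution boundary (zero discriminant) if and only if λ = V₀/√(4·V₊² − V₀²). -/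
/-- At the marginal loss-induced optimum
`(P̃′, Q̃′) = (V₊·(V₊ − V₀·R/|Z|), −V₀·V₊·X/|Z|)`, the discriminant equals
`V₀²·(V₀/2 − V₊·R/|Z|)²`; hence (for `2·V₊ > V₀`) it vanishes iff
`λ = R/X = V₀/√(4·V₊² − V₀²)`. -/
theorem marginal_optimum_discriminant
    (V₀ Vp R X : ℝ) (hV₀ : 0 < V₀) (hVp : 0 < Vp) (hR : 0 < R) (hX : 0 < X) :
    V₀ ^ 4 / 4 + V₀ ^ 2 * (Vp * (Vp - V₀ * R / Real.sqrt (R ^ 2 + X ^ 2))) -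
        (-(V₀ * Vp * X / Real.sqrt (R ^ 2 + X ^ 2))) ^ 2 =
      V₀ ^ 2 * (V₀ / 2 - Vp * R / Real.sqrt (R ^ 2 + X ^ 2)) ^ 2 ∧
    (V₀ < 2 * Vp →
      (V₀ ^ 4 / 4 + V₀ ^ 2 * (Vp * (Vp - V₀ * R / Real.sqrt (R ^ 2 + X ^ 2))) -
          (-(V₀ * Vp * X / Real.sqrt (R ^ 2 + X ^ 2))) ^ 2 = 0 ↔
        R / X = V₀ / Real.sqrt (4 * Vp ^ 2 - V₀ ^ 2))) := by
  have hspos : (0:ℝ) < R ^ 2 + X ^ 2 := by positivity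
  have hs : (0:ℝ) < Real.sqrt (R ^ 2 + X ^ 2) := Real.sqrt_pos.mpr hspos
  have hs2 : Real.sqrt (R ^ 2 + X ^ 2) ^ 2 = R ^ 2 + X ^ 2 :=
    Real.sq_sqrt hspos.le
  set s := Real.sqrt (R ^ 2 + X ^ 2) with hsdef
  have key : V₀ ^ 4 / 4 + V₀ ^ 2 * (Vp * (Vp - V₀ * R / s)) -
      (-(V₀ * Vp * X / s)) ^ 2 = V₀ ^ 2 * (V₀ / 2 - Vp * R / s) ^ 2 := by
    field_simp
    linear_combination (16 * Vp ^ 2) * hs2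
  refine ⟨key, fun hlt => ?_⟩
  rw [key]
  have htpos : (0:ℝ) < 4 * Vp ^ 2 - V₀ ^ 2 := by nlinarith
  have ht : (0:ℝ) < Real.sqrt (4 * Vp ^ 2 - V₀ ^ 2) := Real.sqrt_pos.mpr htpos
  have ht2 : Real.sqrt (4 * Vp ^ 2 - V₀ ^ 2) ^ 2 = 4 * Vp ^ 2 - V₀ ^ 2 :=
    Real.sq_sqrt htpos.le
  set t := Real.sqrt (4 * Vp ^ 2 - V₀ ^ 2) with htdef
  constructor
  · intro h
    have h1 : V₀ / 2 - Vp * R / s = 0 := by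
      rcases mul_eq_zero.mp h with h' | h'
      · exact absurd h' (by positivity)
      · exact pow_eq_zero_iff (n := 2) (by norm_num) |>.mp h'
    have h2 : V₀ * s - 2 * Vp * R = 0 := by
      field_simp at h1; linarith
    have h3 : V₀ ^ 2 * (R ^ 2 + X ^ 2) - 4 * Vp ^ 2 * R ^ 2 = 0 := by
      linear_combination (V₀ * s + 2 * Vp * R) * h2 - V₀ ^ 2 * hs2
    have h4 : (V₀ * X) ^ 2 = (t * R) ^ 2 := by
      linear_combination h3 - R ^ 2 * ht2
    have h5 : V₀ * X = t * R := by
      have := congrArg Real.sqrt h4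
      rwa [Real.sqrt_sq (by positivity), Real.sqrt_sq (by positivity)] at this
    field_simp
    linarith [h5]
  · intro h
    have h5 : R * t - V₀ * X = 0 := by
      field_simp at h; linarith
    have h3 : (2 * Vp * R) ^ 2 = (V₀ * s) ^ 2 := by
      linear_combination (R * t + V₀ * X) * h5 - R ^ 2 * ht2 - V₀ ^ 2 * hs2
    have h2 : 2 * Vp * R = V₀ * s := by
      have := congrArg Real.sqrt h3
      rwa [Real.sqrt_sq (by positivity), Real.sqrt_sq (by positivity)] at this
    have h1 : V₀ / 2 - Vp * R / s = 0 := by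
      field_simp; linarith
    rw [h1]; ring
end
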